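/- Let λ > 0, M' ≥ 1, g ∈ L¹((0,T), ℝ) nonnegative, and define C_{λ} := M' · sup_{t' ∈ [0,T]} ∫₀^{t'} e^{−λ v} g(t'−v) dv. Then C_λ → 0 as λ → ∞. -/

import Mathlib

open MeasureTheory Set Filter Topology

/-- Reflection of a set integral. -/
lemma refl_integral (g : ℝ → ℝ) (t' a : ℝ) (ha : 0 ≤ a) (_hat : a ≤ t') :
    ∫ v in Ioo (0:ℝ) a, g (t' - v) = ∫ u in Ioo (t' - a) t', g u := by
  rw [← integral_Ioc_eq_integral_Ioo, ← intervalIntegral.integral_of_le ha,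
    intervalIntegral.integral_comp_sub_left g t', sub_zero,
    intervalIntegral.integral_of_le (by linarith), integral_Ioc_eq_integral_Ioo]

lemma refl_integrable {g : ℝ → ℝ} {t' : ℝ} (ht : 0 ≤ t')
    (hg : IntegrableOn g (Ioo 0 t')) :
    IntegrableOn (fun v => g (t' - v)) (Ioo 0 t') := by
  have h1 : IntervalIntegrable g volume 0 t' := by
    rw [intervalIntegrable_iff_integrableOn_Ioo_of_le ht]; exact hg
  have h2 := h1.comp_sub_left t'
  rw [sub_zero, sub_self] at h2
  rw [← intervalIntegrable_iff_integrableOn_Ioo_of_le ht]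
  exact h2.symm

/-- Absolute continuity of the integral on small intervals. -/
lemma abs_cont {T : ℝ} {g : ℝ → ℝ} (hg : IntegrableOn g (Ioo 0 T))
    {ε : ℝ} (hε : 0 < ε) :
    ∃ δ > (0:ℝ), ∀ a b : ℝ, 0 ≤ a → b ≤ T → b - a ≤ δ →
      ∫ x in Ioo a b, g x ≤ ε := by
  have hfin : ∫⁻ x, ENNReal.ofReal ‖g x‖ ∂(volume.restrict (Ioo (0:ℝ) T)) ≠ ⊤ := by
    have := hg.2
    rw [hasFiniteIntegral_iff_norm] at this
    exact this.ne
  obtain ⟨δ₀, hδ₀, hδ⟩ := exists_pos_setLIntegral_lt_of_measure_lt hfin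
    (ε := ENNReal.ofReal ε) (ENNReal.ofReal_pos.2 hε).ne'
  set δ₁ := min δ₀ 1 with hδ₁def
  have hδ₁top : δ₁ ≠ ⊤ := ne_top_of_le_ne_top (by simp) (min_le_right _ _)
  have hδ₁0 : δ₁ ≠ 0 := (lt_min hδ₀ (by norm_num)).ne'
  have hδ₁pos : 0 < δ₁.toReal := ENNReal.toReal_pos hδ₁0 hδ₁top
  refine ⟨δ₁.toReal / 2, half_pos hδ₁pos, fun a b ha hb hab => ?_⟩
  rcases le_or_gt b a with hba | hba
  · rw [Ioo_eq_empty (by linarith)]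
    simp [hε.le]
  have hsub : Ioo a b ⊆ Ioo 0 T := fun x hx => ⟨lt_of_le_of_lt ha hx.1, lt_of_lt_of_le hx.2 hb⟩
  have hmeas : (volume.restrict (Ioo (0:ℝ) T)) (Ioo a b) < δ₀ := by
    rw [Measure.restrict_apply measurableSet_Ioo, inter_eq_left.2 hsub, Real.volume_Ioo]
    calc ENNReal.ofReal (b - a) ≤ ENNReal.ofReal (δ₁.toReal / 2) := ENNReal.ofReal_le_ofReal hab
      _ < ENNReal.ofReal δ₁.toReal := ENNReal.ofReal_lt_ofReal_iff hδ₁pos |>.2 (half_lt_self hδ₁pos)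
      _ = δ₁ := ENNReal.ofReal_toReal hδ₁top
      _ ≤ δ₀ := min_le_left _ _
  have hlint := hδ _ hmeas
  have hrw : ∫ x in Ioo a b, g x = ∫ x in Ioo a b, g x ∂(volume.restrict (Ioo (0:ℝ) T)) := by
    rw [Measure.restrict_restrict measurableSet_Ioo, inter_eq_left.2 hsub]
  rw [hrw]
  calc ∫ x in Ioo a b, g x ∂(volume.restrict (Ioo (0:ℝ) T))
      ≤ ‖∫ x in Ioo a b, g x ∂(volume.restrict (Ioo (0:ℝ) T))‖ := by rw [Real.norm_eq_abs]; exact le_abs_self _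
    _ ≤ (∫⁻ x in Ioo a b, ENNReal.ofReal ‖g x‖ ∂(volume.restrict (Ioo (0:ℝ) T))).toReal :=
        norm_integral_le_lintegral_norm _
    _ ≤ ε := ENNReal.toReal_le_of_le_ofReal hε.le hlint.le

theorem stmt15
    (T M' : ℝ) (hT : 0 < T) (hM' : 1 ≤ M')
    (g : ℝ → ℝ) (hg : IntegrableOn g (Ioo 0 T)) (hg0 : ∀ t, 0 ≤ g t) :
    Tendsto
      (fun lam : ℝ => M' * ⨆ t' : Icc (0:ℝ) T,
        ∫ v in Ioo (0:ℝ) t'.1, Real.exp (-lam * v) * g (t'.1 - v))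
      atTop (𝓝 0) := by
  haveI : Nonempty (Icc (0:ℝ) T) := ⟨⟨0, le_refl 0, hT.le⟩⟩
  have hM0 : (0:ℝ) < M' := lt_of_lt_of_le one_pos hM'
  rw [NormedAddCommGroup.tendsto_nhds_zero]
  intro ε hε
  have hε3 : 0 < ε / (3 * M') := by positivity
  set I := ∫ x in Ioo (0:ℝ) T, g x with hI
  have hI0 : 0 ≤ I := setIntegral_nonneg measurableSet_Ioo fun x _ => hg0 x
  obtain ⟨δ, hδ0, habs⟩ := abs_cont hg hε3
  have hexp : Tendsto (fun lam : ℝ => Real.exp (-lam * δ) * I) atTop (𝓝 0) := by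
    have h1 : Tendsto (fun lam : ℝ => -lam * δ) atTop atBot := by
      have := (tendsto_id (α := ℝ)).atTop_mul_const hδ0
      simpa [Function.comp_def, neg_mul] using tendsto_neg_atTop_atBot.comp this
    have h2 := (Real.tendsto_exp_atBot.comp h1).mul_const I
    simpa using h2
  filter_upwards [hexp.eventually (gt_mem_nhds hε3), eventually_ge_atTop (0:ℝ)]
    with lam hlam hlam0
  set B : ℝ := Real.exp (-lam * δ) * I + ε / (3 * M') with hB
  -- the key uniform estimate
  have key : ∀ t' : Icc (0:ℝ) T,
      (∫ v in Ioo (0:ℝ) t'.1, Real.exp (-lam * v) * g (t'.1 - v)) ≤ B := by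
    rintro ⟨t', ht0, htT⟩
    dsimp only
    set G : ℝ → ℝ := fun v => g (t' - v) with hGdef
    have hgt' : IntegrableOn g (Ioo 0 t') := hg.mono_set (Ioo_subset_Ioo_right htT)
    have hGint : IntegrableOn G (Ioo 0 t') := refl_integrable ht0 hgt'
    have hprod : IntegrableOn (fun v => Real.exp (-lam * v) * G v) (Ioo 0 t') := by
      refine Integrable.bdd_mul (c := 1) hGint
        (Real.continuous_exp.comp (by fun_prop)).aestronglyMeasurable ?_
      filter_upwards [ae_restrict_mem measurableSet_Ioo] with v hv
      rw [Real.norm_eq_abs, abs_of_pos (Real.exp_pos _)]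
      exact Real.exp_le_one_iff.2 (by nlinarith [hv.1])
    have hind : IntegrableOn ((Ioo (0:ℝ) δ).indicator G) (Ioo 0 t') :=
      hGint.indicator measurableSet_Ioo
    have hconst : IntegrableOn (fun v => Real.exp (-lam * δ) * G v) (Ioo 0 t') :=
      hGint.const_mul _
    have hle : ∀ v ∈ Ioo (0:ℝ) t',
        Real.exp (-lam * v) * G v ≤
          Real.exp (-lam * δ) * G v + (Ioo (0:ℝ) δ).indicator G v := by
      intro v hv
      by_cases hvδ : v < δ
      · rw [indicator_of_mem (mem_Ioo.2 ⟨hv.1, hvδ⟩)]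
        have e1 : Real.exp (-lam * v) ≤ 1 := Real.exp_le_one_iff.2 (by nlinarith [hv.1])
        have e2 : (0:ℝ) ≤ G v := hg0 _
        nlinarith [Real.exp_pos (-lam * δ)]
      · rw [indicator_of_notMem (fun h => hvδ h.2), add_zero]
        have e1 : Real.exp (-lam * v) ≤ Real.exp (-lam * δ) :=
          Real.exp_le_exp.2 (by nlinarith)
        exact mul_le_mul_of_nonneg_right e1 (hg0 _)
    have hGfull : ∫ v in Ioo (0:ℝ) t', G v ≤ I := by
      have h1 : ∫ v in Ioo (0:ℝ) t', G v = ∫ u in Ioo (0:ℝ) t', g u := by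
        have := refl_integral g t' t' ht0 le_rfl
        rwa [sub_self] at this
      rw [h1, hI]
      exact setIntegral_mono_set hg (Eventually.of_forall fun x => hg0 x)
        (HasSubset.Subset.eventuallyLE (Ioo_subset_Ioo_right htT))
    have hGsmall : ∫ v in Ioo (0:ℝ) t', (Ioo (0:ℝ) δ).indicator G v ≤ ε / (3 * M') := by
      have h1 : ∫ v in Ioo (0:ℝ) t', (Ioo (0:ℝ) δ).indicator G v
          = ∫ v in Ioo (0:ℝ) (min δ t'), G v := by
        rw [integral_indicator measurableSet_Ioo,
          Measure.restrict_restrict measurableSet_Ioo, Ioo_inter_Ioo, max_self]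
      have h2 : ∫ v in Ioo (0:ℝ) (min δ t'), G v
          = ∫ u in Ioo (t' - min δ t') t', g u :=
        refl_integral g t' _ (le_min hδ0.le ht0) (min_le_right _ _)
      rw [h1, h2]
      exact habs _ _ (by simp [min_le_right δ t']) htT (by simp [min_le_left δ t'])
    calc ∫ v in Ioo (0:ℝ) t', Real.exp (-lam * v) * G v
        ≤ ∫ v in Ioo (0:ℝ) t',
            (Real.exp (-lam * δ) * G v + (Ioo (0:ℝ) δ).indicator G v) :=
          setIntegral_mono_on hprod (hconst.add hind) measurableSet_Ioo hle
      _ = Real.exp (-lam * δ) * (∫ v in Ioo (0:ℝ) t', G v)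
            + ∫ v in Ioo (0:ℝ) t', (Ioo (0:ℝ) δ).indicator G v := by
          rw [integral_add hconst hind, integral_const_mul]
      _ ≤ Real.exp (-lam * δ) * I + ε / (3 * M') := by
          gcongr
      _ = B := rfl
  have hbdd : BddAbove (range fun t' : Icc (0:ℝ) T =>
      ∫ v in Ioo (0:ℝ) t'.1, Real.exp (-lam * v) * g (t'.1 - v)) := by
    refine ⟨B, ?_⟩
    rintro x ⟨t', rfl⟩
    exact key t'
  set S : ℝ := ⨆ t' : Icc (0:ℝ) T,
    ∫ v in Ioo (0:ℝ) t'.1, Real.exp (-lam * v) * g (t'.1 - v) with hS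
  have hSle : S ≤ B := ciSup_le key
  have hS0 : 0 ≤ S := by
    have h00 := le_ciSup hbdd (⟨0, le_refl 0, hT.le⟩ : Icc (0:ℝ) T)
    simp only [Set.Ioo_self, Measure.restrict_empty, integral_zero_measure] at h00
    exact h00
  rw [Real.norm_eq_abs, abs_of_nonneg (mul_nonneg hM0.le hS0)]
  have hBlt : B < 2 * (ε / (3 * M')) := by
    rw [hB]; linarith
  calc M' * S ≤ M' * B := by gcongr
    _ < M' * (2 * (ε / (3 * M'))) := by gcongr
    _ = 2 * ε / 3 := by field_simp
    _ < ε := by linarith
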